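/- Let X ⊆ ℝⁿ be closed convex, f convex differentiable, φ convex. For η > 0, σ ≥ 0, x, x̄ ∈ ℝⁿ, let x⁺ := argmin_{u∈X} ⟨∇f(x), u⟩ + φ(u) + ((η+σ)/2)‖u - x‖² and x⁺⁺ := argmin_{u∈X} ⟨∇f(x), u⟩ + φ(u) + (σ/2)‖u - x̄‖² + (η/2)‖u - x‖². Then ‖x⁺ - x⁺⁺‖ ≤ (σ/(η+σ))‖x - x̄‖. -/

import Mathlib

open scoped RealInnerProductSpace

variable {E : Type*} [NormedAddCommGroup E] [InnerProductSpace ℝ E]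

lemma combo_norm_sq (a b c : E) (t : ℝ) :
    ‖((1-t)•a + t•b) - c‖^2 =
      (1-t)*‖a-c‖^2 + t*‖b-c‖^2 - t*(1-t)*‖a-b‖^2 := by
  have h1 : ((1-t)•a + t•b) - c = (1-t)•(a-c) + t•(b-c) := by
    rw [smul_sub, smul_sub]; module
  have hab : ‖a-b‖^2 = ‖a-c‖^2 - 2*⟪a-c,b-c⟫ + ‖b-c‖^2 := by
    have h2 : a - b = (a-c) - (b-c) := by abel
    rw [h2, norm_sub_sq_real]
  rw [h1, norm_add_sq_real, norm_smul, norm_smul,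
    real_inner_smul_left, real_inner_smul_right, Real.norm_eq_abs, Real.norm_eq_abs,
    mul_pow, mul_pow, sq_abs, sq_abs, hab]
  ring

lemma strong_min (X : Set E) (hX : Convex ℝ X) (ψ : E → ℝ)
    (hψ : ConvexOn ℝ Set.univ ψ) (m k : ℝ) (p q z u : E)
    (hz : z ∈ X) (hu : u ∈ X)
    (hmin : ∀ v ∈ X, ψ z + m/2*‖z-p‖^2 + k/2*‖z-q‖^2 ≤
      ψ v + m/2*‖v-p‖^2 + k/2*‖v-q‖^2)
    (t : ℝ) (ht0 : 0 < t) (ht1 : t < 1) :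
    ψ z + m/2*‖z-p‖^2 + k/2*‖z-q‖^2 + (m+k)/2*(1-t)*‖z-u‖^2
      ≤ ψ u + m/2*‖u-p‖^2 + k/2*‖u-q‖^2 := by
  have hvX : (1-t)•z + t•u ∈ X := hX hz hu (by linarith) ht0.le (by ring)
  have h1 := hmin _ hvX
  have h2 : ψ ((1-t)•z + t•u) ≤ (1-t)*ψ z + t*ψ u :=
    hψ.2 (Set.mem_univ z) (Set.mem_univ u) (by linarith) ht0.le (by ring)
  rw [combo_norm_sq z u p t, combo_norm_sq z u q t] at h1
  have h5 : t * (ψ z + m/2*‖z-p‖^2 + k/2*‖z-q‖^2 + (m+k)/2*(1-t)*‖z-u‖^2)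
      ≤ t * (ψ u + m/2*‖u-p‖^2 + k/2*‖u-q‖^2) := by nlinarith [h1, h2]
  exact le_of_mul_le_mul_left h5 ht0

theorem stmt_3 {n : ℕ} (X : Set (EuclideanSpace ℝ (Fin n)))
    (hXne : X.Nonempty) (hXclosed : IsClosed X) (hXconv : Convex ℝ X)
    (f φ : EuclideanSpace ℝ (Fin n) → ℝ)
    (hf : ConvexOn ℝ Set.univ f) (hdiff : Differentiable ℝ f)
    (hφ : ConvexOn ℝ Set.univ φ)
    (η σ : ℝ) (hη : 0 < η) (hσ : 0 ≤ σ)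
    (x xb xp xpp : EuclideanSpace ℝ (Fin n))
    (hxp : xp ∈ X ∧ ∀ u ∈ X,
      ⟪gradient f x, xp⟫ + φ xp + (η + σ) / 2 * ‖xp - x‖ ^ 2 ≤
      ⟪gradient f x, u⟫ + φ u + (η + σ) / 2 * ‖u - x‖ ^ 2)
    (hxpp : xpp ∈ X ∧ ∀ u ∈ X,
      ⟪gradient f x, xpp⟫ + φ xpp + σ / 2 * ‖xpp - xb‖ ^ 2 + η / 2 * ‖xpp - x‖ ^ 2 ≤
      ⟪gradient f x, u⟫ + φ u + σ / 2 * ‖u - xb‖ ^ 2 + η / 2 * ‖u - x‖ ^ 2) :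
    ‖xp - xpp‖ ≤ σ / (η + σ) * ‖x - xb‖ := by
  set g := gradient f x with hg
  set ψ : EuclideanSpace ℝ (Fin n) → ℝ := fun u => ⟪g, u⟫ + φ u with hψdef
  have hψ : ConvexOn ℝ Set.univ ψ := by
    refine ConvexOn.add ?_ hφ
    refine ⟨convex_univ, fun a _ b _ s r hs hr hsr => le_of_eq ?_⟩
    rw [inner_add_right, real_inner_smul_right, real_inner_smul_right, smul_eq_mul, smul_eq_mul]
  -- strong convexity inequalities for every t ∈ (0,1)
  have key : ∀ t : ℝ, 0 < t → t < 1 →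
      (1-t) * ((η+σ) * ‖xp - xpp‖^2) ≤ σ * ‖xp - xpp‖ * ‖x - xb‖ := by
    intro t ht0 ht1
    have I1 := strong_min X hXconv ψ hψ (η+σ) 0 x x xp xpp hxp.1 hxpp.1
      (fun v hv => by have := hxp.2 v hv; simp only [hψdef]; linarith)
      t ht0 ht1
    have I2 := strong_min X hXconv ψ hψ σ η xb x xpp xp hxpp.1 hxp.1
      (fun v hv => by have := hxpp.2 v hv; simp only [hψdef]; linarith)
      t ht0 ht1
    have hrev : ‖xpp - xp‖ = ‖xp - xpp‖ := norm_sub_rev _ _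
    rw [hrev] at I2
    -- the cross-term identity
    have hid : ‖xpp-x‖^2 + ‖xp-xb‖^2 - ‖xp-x‖^2 - ‖xpp-xb‖^2
        = 2 * ⟪xpp - xp, xb - x⟫ := by
      rw [norm_sub_sq_real, norm_sub_sq_real, norm_sub_sq_real, norm_sub_sq_real]
      simp only [inner_sub_left, inner_sub_right]
      ring
    have h6 : σ/2 * (‖xpp-x‖^2 + ‖xp-xb‖^2 - ‖xp-x‖^2 - ‖xpp-xb‖^2)
        = σ * ⟪xpp - xp, xb - x⟫ := by rw [hid]; ring
    have hcs : ⟪xpp - xp, xb - x⟫ ≤ ‖xpp - xp‖ * ‖xb - x‖ := real_inner_le_norm _ _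
    have hrev2 : ‖xb - x‖ = ‖x - xb‖ := norm_sub_rev _ _
    rw [hrev2, hrev] at hcs
    have hcs2 := mul_le_mul_of_nonneg_left hcs hσ
    linarith [I1, I2, h6, hcs2]
  -- pass to the limit t → 0
  have hmain : (η+σ) * ‖xp - xpp‖^2 ≤ σ * ‖xp - xpp‖ * ‖x - xb‖ := by
    set C := (η+σ) * ‖xp - xpp‖^2 with hC
    set B := σ * ‖xp - xpp‖ * ‖x - xb‖ with hB
    have hC0 : 0 ≤ C := by positivity
    have hB0 : 0 ≤ B := by positivity
    by_contra hlt
    push_neg at hlt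
    have hCpos : 0 < C := lt_of_le_of_lt hB0 hlt
    have ht := key ((C-B)/(2*C)) (div_pos (by linarith) (by linarith)) (by
      rw [div_lt_one (by linarith)]; linarith)
    have : (1 - (C-B)/(2*C)) * C = C - (C-B)/2 := by
      field_simp
    rw [this] at ht
    linarith
  -- conclude
  rcases eq_or_lt_of_le (norm_nonneg (xp - xpp)) with h0 | h0
  · rw [← h0]; positivity
  · rw [div_mul_eq_mul_div, le_div_iff₀ (by linarith : (0:ℝ) < η + σ)]
    nlinarith [hmain, h0]
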